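/- Define W : ℝ^{3×3} → (−∞, +∞] by W(F) = (|F₁|³ + |F₂|³ + |F₃|³)/3 + 1/det F if det F > 0 and W(F) = +∞ otherwise, where F₁, F₂, F₃ are the columns of F. Let π ∈ ℝ and let ξ₁, ξ₂ ∈ ℝ³ with ξ₁ × ξ₂ ≠ 0. Then s(ξ₁ × ξ₂) := |ξ₁ × ξ₂| √(4|ξ₁ × ξ₂| + π²|ξ₁ × ξ₂|⁴) − π|ξ₁ × ξ₂|³ is strictly positive, and the infimum over a ∈ ℝ³ of W(ξ₁|ξ₂|a) + π det(ξ₁|ξ₂|a) is attained and equals (|ξ₁|³ + |ξ₂|³)/3 + (√2/3) [ 4/√(s(ξ₁ × ξ₂)) + π √(s(ξ₁ × ξ₂)) ]. -/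

import Mathlib

noncomputable section

/-- The Euclidean norm on `ℝ³`. -/
def enr (v : Fin 3 → ℝ) : ℝ := Real.sqrt (∑ i, (v i) ^ 2)

/-- The cross product on `ℝ³`. -/
def cross (u w : Fin 3 → ℝ) : Fin 3 → ℝ :=
  ![u 1 * w 2 - u 2 * w 1, u 2 * w 0 - u 0 * w 2, u 0 * w 1 - u 1 * w 0]

/-- The `3 × 3` matrix with columns `ξ₁, ξ₂, a`. -/
def colsMat (ξ₁ ξ₂ a : Fin 3 → ℝ) : Matrix (Fin 3) (Fin 3) ℝ :=
  Matrix.of fun i j => ![ξ₁, ξ₂, a] j i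

/-- The stored energy density `W(F) = (|F₁|³+|F₂|³+|F₃|³)/3 + 1/det F` for `det F > 0`,
`+∞` otherwise. -/
def Wex (F : Matrix (Fin 3) (Fin 3) ℝ) : EReal :=
  if 0 < F.det then
    ((((enr fun i => F i 0) ^ 3 + (enr fun i => F i 1) ^ 3 + (enr fun i => F i 2) ^ 3) / 3
      + 1 / F.det : ℝ) : EReal)
  else ⊤

/-- The quantity `s(v) = |v|√(4|v| + π²|v|⁴) − π|v|³`. -/
def sfun (π : ℝ) (v : Fin 3 → ℝ) : ℝ :=
  enr v * Real.sqrt (4 * enr v + π ^ 2 * (enr v) ^ 4) - π * (enr v) ^ 3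

lemma auxIneq (π c t t₀ : ℝ) (hc : 0 < c) (ht : 0 < t) (ht0 : 0 < t₀)
    (hkey : t₀^4 + π*c^3*t₀^2 = c^3) :
    t₀^3/(3*c^3) + 1/t₀ + π*t₀ ≤ t^3/(3*c^3) + 1/t + π*t := by
  have hpi : π = (c^3 - t₀^4)/(c^3*t₀^2) := by
    field_simp; linarith
  have hnum : (0:ℝ) ≤ t^2*t₀^2+2*t*t₀^3+3*c^3 := by
    nlinarith [mul_pos ht (pow_pos ht0 3), pow_pos hc 3, sq_nonneg (t*t₀)]
  have h : t^3/(3*c^3) + 1/t + π*t - (t₀^3/(3*c^3) + 1/t₀ + π*t₀)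
      = (t-t₀)^2*(t^2*t₀^2+2*t*t₀^3+3*c^3)/(3*t*c^3*t₀^2) := by
    rw [hpi]; field_simp; ring
  nlinarith [h, div_nonneg (mul_nonneg (sq_nonneg (t-t₀)) hnum)
    (by positivity : (0:ℝ) ≤ 3*t*c^3*t₀^2)]

lemma enr_smul (k : ℝ) (v : Fin 3 → ℝ) (hk : 0 ≤ k) : enr (fun i => k * v i) = k * enr v := by
  unfold enr
  rw [show ∑ i, (k * v i)^2 = k^2 * ∑ i, (v i)^2 by rw [Finset.mul_sum]; congr 1; funext; ring,
    Real.sqrt_mul (by positivity), Real.sqrt_sq hk]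

lemma det_colsMat (ξ₁ ξ₂ a : Fin 3 → ℝ) : (colsMat ξ₁ ξ₂ a).det
    = cross ξ₁ ξ₂ 0 * a 0 + cross ξ₁ ξ₂ 1 * a 1 + cross ξ₁ ξ₂ 2 * a 2 := by
  simp [colsMat, Matrix.det_fin_three, cross]; ring

lemma col0 (ξ₁ ξ₂ a : Fin 3 → ℝ) : (fun i => colsMat ξ₁ ξ₂ a i 0) = ξ₁ := by
  funext i; simp [colsMat]

lemma col1 (ξ₁ ξ₂ a : Fin 3 → ℝ) : (fun i => colsMat ξ₁ ξ₂ a i 1) = ξ₂ := by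
  funext i; simp [colsMat]

lemma col2 (ξ₁ ξ₂ a : Fin 3 → ℝ) : (fun i => colsMat ξ₁ ξ₂ a i 2) = a := by
  funext i; simp [colsMat]

lemma csIneq (v a : Fin 3 → ℝ) :
    (v 0*a 0+v 1*a 1+v 2*a 2)^2 ≤ (∑ i, (v i)^2) * (∑ i, (a i)^2) := by
  rw [Fin.sum_univ_three, Fin.sum_univ_three]
  nlinarith [sq_nonneg (v 0*a 1 - v 1*a 0), sq_nonneg (v 0*a 2 - v 2*a 0),
    sq_nonneg (v 1*a 2 - v 2*a 1)]

set_option maxHeartbeats 1600000 in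
/-- Explicit computation of `(W^π)₀(ξ)`: the infimum over `a` of
`W(ξ₁|ξ₂|a) + π det(ξ₁|ξ₂|a)` is attained and has the stated explicit value. -/
theorem stmt11 (π : ℝ) (ξ₁ ξ₂ : Fin 3 → ℝ) (hcross : cross ξ₁ ξ₂ ≠ 0) :
    0 < sfun π (cross ξ₁ ξ₂) ∧
    ∃ a₀ : Fin 3 → ℝ,
      (∀ a : Fin 3 → ℝ,
        Wex (colsMat ξ₁ ξ₂ a₀) + ((π * (colsMat ξ₁ ξ₂ a₀).det : ℝ) : EReal)
          ≤ Wex (colsMat ξ₁ ξ₂ a) + ((π * (colsMat ξ₁ ξ₂ a).det : ℝ) : EReal)) ∧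
      Wex (colsMat ξ₁ ξ₂ a₀) + ((π * (colsMat ξ₁ ξ₂ a₀).det : ℝ) : EReal)
        = ((((enr ξ₁) ^ 3 + (enr ξ₂) ^ 3) / 3
            + (Real.sqrt 2 / 3) * (4 / Real.sqrt (sfun π (cross ξ₁ ξ₂))
              + π * Real.sqrt (sfun π (cross ξ₁ ξ₂))) : ℝ) : EReal) := by
  set v := cross ξ₁ ξ₂ with hv
  obtain ⟨i, hi⟩ := Function.ne_iff.mp hcross
  have hvsum : 0 < ∑ j, (v j)^2 :=
    Finset.sum_pos' (fun j _ => sq_nonneg _) ⟨i, Finset.mem_univ i, by have h0 : v i ≠ 0 := fun h => hi (by simp [h]); positivity⟩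
  set c := enr v with hcdef
  have hc : 0 < c := Real.sqrt_pos.mpr hvsum
  have hcsq : c^2 = ∑ j, (v j)^2 := Real.sq_sqrt hvsum.le
  set Q := Real.sqrt (4 * enr v + π ^ 2 * (enr v) ^ 4) with hQdef
  have hQsq : Q^2 = 4*c + π^2*c^4 := Real.sq_sqrt (by positivity)
  have hQpos : 0 < Q := Real.sqrt_pos.mpr (by positivity)
  have hsfun : sfun π v = c*Q - π*c^3 := rfl
  have hs : 0 < sfun π v := by
    rw [hsfun]
    nlinarith [mul_pos hc hQpos, pow_pos hc 3, hQsq]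
  set t₀ := Real.sqrt (sfun π v / 2) with ht0def
  have ht0 : 0 < t₀ := Real.sqrt_pos.mpr (by linarith)
  have ht0sq : t₀^2 = sfun π v / 2 := Real.sq_sqrt (by linarith)
  have hkey : t₀^4 + π*c^3*t₀^2 = c^3 := by
    rw [show t₀^4 = (t₀^2)^2 by ring, ht0sq, hsfun]
    nlinarith [hQsq]
  -- the minimizer
  set a₀ : Fin 3 → ℝ := fun j => (t₀/c^2) * v j with ha₀def
  have hdet0 : (colsMat ξ₁ ξ₂ a₀).det = t₀ := by
    rw [det_colsMat, ha₀def, ← hv]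
    have : v 0 * ((t₀/c^2) * v 0) + v 1 * ((t₀/c^2) * v 1) + v 2 * ((t₀/c^2) * v 2)
        = (t₀/c^2) * ∑ j, (v j)^2 := by rw [Fin.sum_univ_three]; ring
    rw [this, ← hcsq]; field_simp
  have henra₀ : enr a₀ = t₀/c := by
    rw [ha₀def, enr_smul _ _ (by positivity), ← hcdef]
    field_simp
  -- LHS value
  have hLHS : Wex (colsMat ξ₁ ξ₂ a₀) + ((π * (colsMat ξ₁ ξ₂ a₀).det : ℝ) : EReal)
      = ((((enr ξ₁)^3 + (enr ξ₂)^3)/3 + ((t₀/c)^3/3 + 1/t₀ + π*t₀) : ℝ) : EReal) := by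
    rw [Wex, if_pos (by rw [hdet0]; exact ht0), col0, col1, col2, hdet0, henra₀,
      ← EReal.coe_add]
    norm_cast
    ring
  refine ⟨hs, a₀, ?_, ?_⟩
  · intro a
    rw [hLHS]
    by_cases hda : 0 < (colsMat ξ₁ ξ₂ a).det
    · set t := (colsMat ξ₁ ξ₂ a).det with htdef
      rw [Wex, if_pos hda, col0, col1, col2, ← EReal.coe_add]
      rw [EReal.coe_le_coe_iff]
      -- Cauchy-Schwarz: t ≤ c * enr a
      have hasum : (0:ℝ) ≤ ∑ j, (a j)^2 := Finset.sum_nonneg fun j _ => sq_nonneg _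
      have hasq : (enr a)^2 = ∑ j, (a j)^2 := Real.sq_sqrt hasum
      have hann : 0 ≤ enr a := Real.sqrt_nonneg _
      have htle : t ≤ c * enr a := by
        have hcs := csIneq v a
        rw [← hcsq, ← hasq] at hcs
        have ht2 : t^2 ≤ (c * enr a)^2 := by
          rw [htdef, det_colsMat, ← hv]; nlinarith [hcs]
        nlinarith [mul_nonneg hc.le hann, hda]
      have hcube : (t/c)^3 ≤ (enr a)^3 := by
        apply pow_le_pow_left₀ (by positivity)
        rw [div_le_iff₀ hc]; linarith
      have hmain := auxIneq π c t t₀ hc hda ht0 hkey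
      have e1 : (t₀/c)^3/3 = t₀^3/(3*c^3) := by field_simp
      have e2 : (t/c)^3/3 = t^3/(3*c^3) := by field_simp
      rw [← e1, ← e2] at hmain
      linarith [hcube, hmain]
    · rw [Wex, if_neg hda]
      rw [show (⊤ : EReal) + ((π * (colsMat ξ₁ ξ₂ a).det : ℝ) : EReal) = ⊤ from
        EReal.top_add_of_ne_bot (by exact_mod_cast EReal.coe_ne_bot _)]
      exact le_top
  · rw [hLHS, EReal.coe_eq_coe_iff]
    have hsqrt : Real.sqrt (sfun π v) = Real.sqrt 2 * t₀ := by
      rw [show sfun π v = 2 * t₀^2 by linarith [ht0sq],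
        Real.sqrt_mul (by norm_num), Real.sqrt_sq ht0.le]
    rw [hsqrt]
    have h2 : Real.sqrt 2 * Real.sqrt 2 = 2 := Real.mul_self_sqrt (by norm_num)
    have hs2 : Real.sqrt 2 ≠ 0 := by positivity
    have hval : (t₀/c)^3/3 + 1/t₀ + π*t₀ = 4/(3*t₀) + 2*π*t₀/3 := by
      field_simp
      linear_combination hkey
    rw [hval]
    have hfin : 4/(3*t₀) + 2*π*t₀/3
        = (Real.sqrt 2/3) * (4/(Real.sqrt 2*t₀) + π*(Real.sqrt 2*t₀)) := by
      field_simp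
      linear_combination (-π*t₀^2)*h2
    rw [hfin]
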